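/- For j ∈ {0,1}, the function p(ν;λ) = λ(λ−1)(|log ν| − 1 − d₀(λ)/2) + λ − 5/6, with d₀(λ) = −ψ(1) − ψ(2) + ψ(λ/2 + 1) + ψ((λ+1)/2), satisfies d₀(1−j) = 1 − 2log2 − 2j; consequently if λ̂₁(ν) solves p(ν; λ̂₁) = 0 with |λ̂₁| ≲ 1/|log ν|, then λ̂₁ = −(5/6)/|log ν| + (−5/9 + (5/6)log 2)/|log ν|² + O(1/|log ν|³) as ν → 0. -/
import Mathlib


open Real

/-- The digamma function `ψ(x) = Γ'(x)/Γ(x) = (log ∘ Γ)'(x)`. -/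
noncomputable def digamma (x : ℝ) : ℝ := deriv (fun t => Real.log (Real.Gamma t)) x

lemma ne_neg_nat {x : ℝ} (hx : 0 < x) : ∀ m : ℕ, x ≠ -m := fun m =>
  (((neg_nonpos.mpr (Nat.cast_nonneg m)).trans_lt hx).ne')

lemma hasDerivAt_logGamma {x : ℝ} (hx : 0 < x) :
    HasDerivAt (fun t => Real.log (Real.Gamma t)) (digamma x) x := by
  have h : DifferentiableAt ℝ (fun t => Real.log (Real.Gamma t)) x :=
    ((Real.differentiableAt_Gamma (ne_neg_nat hx)).hasDerivAt.log
      (Real.Gamma_pos_of_pos hx).ne').differentiableAt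
  exact h.hasDerivAt

lemma digamma_add_one {x : ℝ} (hx : 0 < x) : digamma (x + 1) = digamma x + 1 / x := by
  have h1 : HasDerivAt (fun t : ℝ => Real.log (Real.Gamma (t + 1))) (digamma (x + 1) * 1) x :=
    (hasDerivAt_logGamma (by linarith)).comp x ((hasDerivAt_id x).add_const 1)
  have h2 : HasDerivAt (fun t : ℝ => Real.log t + Real.log (Real.Gamma t))
      (x⁻¹ + digamma x) x := (Real.hasDerivAt_log hx.ne').add (hasDerivAt_logGamma hx)
  have heq : (fun t : ℝ => Real.log (Real.Gamma (t + 1))) =ᶠ[nhds x]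
      (fun t : ℝ => Real.log t + Real.log (Real.Gamma t)) := by
    filter_upwards [isOpen_Ioi.eventually_mem (Set.mem_Ioi.mpr hx)] with t ht
    have ht' : (0:ℝ) < t := ht
    rw [Real.Gamma_add_one ht'.ne', Real.log_mul ht'.ne' (Real.Gamma_pos_of_pos ht').ne']
  have := h2.congr_of_eventuallyEq heq
  have hu := h1.unique this
  rw [mul_one] at hu
  rw [hu, one_div]; ring

lemma digamma_half : digamma (1 / 2) = digamma 1 - 2 * Real.log 2 := by
  have hF : HasDerivAt (fun s : ℝ => Real.log (Real.Gamma s) + Real.log (Real.Gamma (s + 1 / 2)))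
      (digamma (1 / 2) + digamma 1 * 1) (1 / 2) := by
    have hc : HasDerivAt (fun s : ℝ => Real.log (Real.Gamma (s + 1 / 2)))
        (digamma ((1:ℝ)/2 + 1/2) * 1) (1/2) :=
      (hasDerivAt_logGamma (by norm_num)).comp _ ((hasDerivAt_id _).add_const (1/2 : ℝ))
    have : ((1:ℝ)/2 + 1/2) = 1 := by norm_num
    rw [this] at hc
    exact (hasDerivAt_logGamma (by norm_num)).add hc
  have hG : HasDerivAt (fun s : ℝ =>
      Real.log (Real.Gamma (2 * s)) + ((1 - 2 * s) * Real.log 2 + Real.log (Real.sqrt π)))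
      (digamma 1 * 2 + (-2 * Real.log 2)) (1 / 2) := by
    have hin : HasDerivAt (fun s : ℝ => 2 * s) 2 (1/2 : ℝ) := by
      simpa using (hasDerivAt_id ((1:ℝ)/2)).const_mul (2:ℝ)
    have hc : HasDerivAt (fun s : ℝ => Real.log (Real.Gamma (2 * s)))
        (digamma (2 * (1/2 : ℝ)) * 2) (1/2) :=
      (hasDerivAt_logGamma (by norm_num)).comp _ hin
    have h2 : (2 * (1/2 : ℝ)) = 1 := by norm_num
    rw [h2] at hc
    have hlin : HasDerivAt (fun s : ℝ => (1 - 2 * s) * Real.log 2 + Real.log (Real.sqrt π))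
        (-2 * Real.log 2) (1/2) := by
      have : HasDerivAt (fun s : ℝ => (1 - 2 * s)) (-2) (1/2) := by
        simpa using ((hasDerivAt_id ((1:ℝ)/2)).const_mul 2).const_sub 1
      simpa using (this.mul_const (Real.log 2)).add_const (Real.log (Real.sqrt π))
    exact hc.add hlin
  have heq : (fun s : ℝ => Real.log (Real.Gamma s) + Real.log (Real.Gamma (s + 1 / 2)))
      =ᶠ[nhds (1/2 : ℝ)] (fun s : ℝ =>
      Real.log (Real.Gamma (2 * s)) + ((1 - 2 * s) * Real.log 2 + Real.log (Real.sqrt π))) := by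
    filter_upwards [isOpen_Ioi.eventually_mem (Set.mem_Ioi.mpr (by norm_num : (0:ℝ) < 1/2))]
      with s hs
    have hs' : (0:ℝ) < s := hs
    have key := Real.Gamma_mul_Gamma_add_half s
    have h1 : Real.log (Real.Gamma s * Real.Gamma (s + 1/2)) =
        Real.log (Real.Gamma s) + Real.log (Real.Gamma (s + 1/2)) :=
      Real.log_mul (Real.Gamma_pos_of_pos hs').ne'
        (Real.Gamma_pos_of_pos (by linarith)).ne'
    have h2 : Real.log (Real.Gamma (2*s) * (2:ℝ) ^ (1 - 2*s) * Real.sqrt π) =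
        Real.log (Real.Gamma (2*s)) + ((1 - 2*s) * Real.log 2 + Real.log (Real.sqrt π)) := by
      rw [Real.log_mul (by positivity) (Real.sqrt_pos.mpr Real.pi_pos).ne',
        Real.log_mul (Real.Gamma_pos_of_pos (by linarith)).ne' (by positivity),
        Real.log_rpow (by norm_num)]
      ring
    rw [← h1, key, h2]
  have := hF.unique ((hG.congr_of_eventuallyEq heq))
  linarith [this]

noncomputable def d₀ (lam : ℝ) : ℝ :=
  -digamma 1 - digamma 2 + digamma (lam / 2 + 1) + digamma ((lam + 1) / 2)

lemma digamma_two : digamma 2 = digamma 1 + 1 := by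
  have := digamma_add_one (x := 1) one_pos
  norm_num at this; norm_num [this]

lemma digamma_three_half : digamma (3/2) = digamma (1/2) + 2 := by
  have := digamma_add_one (x := 1/2) (by norm_num)
  norm_num at this; norm_num [this]

lemma d0_one : d₀ 1 = 1 - 2 * Real.log 2 := by
  have h1 : (1:ℝ)/2 + 1 = 3/2 := by norm_num
  have h2 : ((1:ℝ)+1)/2 = 1 := by norm_num
  rw [d₀, h1, h2, digamma_two, digamma_three_half, digamma_half]
  ring

lemma d0_zero : d₀ 0 = -1 - 2 * Real.log 2 := by
  have h1 : (0:ℝ)/2 + 1 = 1 := by norm_num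
  have h2 : ((0:ℝ)+1)/2 = 1/2 := by norm_num
  rw [d₀, h1, h2, digamma_two, digamma_half]
  ring

lemma analyticAt_RGamma {x : ℝ} (hx : 0 < x) : AnalyticAt ℝ Real.Gamma x := by
  have hU : IsOpen {z : ℂ | 0 < z.re} := isOpen_lt continuous_const Complex.continuous_re
  have hd : DifferentiableOn ℂ Complex.Gamma {z : ℂ | 0 < z.re} := fun z hz =>
    (Complex.differentiableAt_Gamma z (fun m => by
      intro h
      rw [h] at hz
      simp only [Set.mem_setOf_eq, Complex.neg_re, Complex.natCast_re] at hz
      have : (0:ℝ) ≤ (m:ℝ) := Nat.cast_nonneg m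
      linarith)).differentiableWithinAt
  have hz : AnalyticAt ℂ Complex.Gamma (x : ℂ) :=
    hd.analyticAt (hU.mem_nhds (by simpa using hx))
  have h1 : AnalyticAt ℝ (fun t : ℝ => (t : ℂ)) x := Complex.ofRealCLM.analyticAt x
  have h2 : AnalyticAt ℝ (Complex.Gamma ∘ fun t : ℝ => (t : ℂ)) x :=
    (hz.restrictScalars (𝕜 := ℝ)).comp h1
  have h3 : AnalyticAt ℝ (Complex.re ∘ (Complex.Gamma ∘ fun t : ℝ => (t : ℂ))) x :=
    ((Complex.reCLM.analyticAt _).comp h2 : _)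
  refine h3.congr ?_
  filter_upwards with t
  simp [Function.comp, Complex.Gamma_ofReal]

lemma analyticAt_digamma {x : ℝ} (hx : 0 < x) : AnalyticAt ℝ digamma x := by
  have hG : AnalyticOnNhd ℝ Real.Gamma (Set.Ioi 0) := fun y hy => analyticAt_RGamma hy
  have hD : AnalyticAt ℝ (deriv Real.Gamma) x := hG.deriv x hx
  have hq : AnalyticAt ℝ (fun t => deriv Real.Gamma t / Real.Gamma t) x :=
    hD.div (analyticAt_RGamma hx) (Real.Gamma_pos_of_pos hx).ne'
  refine hq.congr ?_
  filter_upwards [isOpen_Ioi.eventually_mem (Set.mem_Ioi.mpr hx)] with t ht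
  have ht' : (0:ℝ) < t := ht
  have h := ((Real.differentiableAt_Gamma (ne_neg_nat ht')).hasDerivAt.log
    (Real.Gamma_pos_of_pos ht').ne')
  exact h.deriv.symm

lemma analyticAt_d0 : AnalyticAt ℝ d₀ 0 := by
  have ha : AnalyticAt ℝ (fun lam : ℝ => lam / 2 + 1) 0 := by
    apply AnalyticAt.add
    · exact (analyticAt_id (𝕜 := ℝ)).div analyticAt_const two_ne_zero
    · exact analyticAt_const
  have hb : AnalyticAt ℝ (fun lam : ℝ => (lam + 1) / 2) 0 := by
    apply AnalyticAt.div
    · exact (analyticAt_id (𝕜 := ℝ)).add analyticAt_const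
    · exact analyticAt_const
    · exact two_ne_zero
  have h1 : AnalyticAt ℝ (digamma ∘ (fun lam : ℝ => lam / 2 + 1)) 0 :=
    AnalyticAt.comp (f := fun lam : ℝ => lam / 2 + 1)
      (analyticAt_digamma (x := (0:ℝ)/2 + 1) (by norm_num)) ha
  have h2 : AnalyticAt ℝ (digamma ∘ (fun lam : ℝ => (lam + 1) / 2)) 0 :=
    AnalyticAt.comp (f := fun lam : ℝ => (lam + 1) / 2)
      (analyticAt_digamma (x := ((0:ℝ)+1)/2) (by norm_num)) hb
  have : AnalyticAt ℝ (fun lam : ℝ =>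
      -digamma 1 - digamma 2 + digamma (lam / 2 + 1) + digamma ((lam + 1) / 2)) 0 :=
    (analyticAt_const.add h1).add h2
  exact this.congr (by filter_upwards with t; rfl)

lemma d0_lip : ∃ K : ℝ, 0 ≤ K ∧ ∃ δ : ℝ, 0 < δ ∧
    ∀ t : ℝ, |t| ≤ δ → |d₀ t - d₀ 0| ≤ K * |t| := by
  obtain ⟨K, t, ht, hK⟩ := (analyticAt_d0.contDiffAt (n := 1)).exists_lipschitzOnWith
  obtain ⟨ε, hε, hball⟩ := Metric.mem_nhds_iff.mp ht
  refine ⟨K, K.coe_nonneg, ε/2, by linarith, fun s hs => ?_⟩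
  have hs0 : s ∈ t := hball (by simpa [Real.dist_eq] using lt_of_le_of_lt hs (by linarith))
  have h00 : (0:ℝ) ∈ t := hball (by simpa [Real.dist_eq] using hε)
  have := hK.dist_le_mul s hs0 0 h00
  simpa [Real.dist_eq] using this

/-- `p(ν;λ) = λ(λ−1)(|log ν| − 1 − d₀(λ)/2) + λ − 5/6`. -/
noncomputable def pfun (ν lam : ℝ) : ℝ :=
  lam * (lam - 1) * (|Real.log ν| - 1 - d₀ lam / 2) + lam - 5 / 6

set_option maxHeartbeats 2000000 in
lemma wbound (r ℓ u : ℝ) (hrl : -1 ≤ r) (hrr : r ≤ 1)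
    (hl1 : 3/5 ≤ ℓ) (hl2 : ℓ ≤ 7/10) (hu : 0 ≤ u) (hu1 : u ≤ 1) :
    |((-55/216) + (10/9)*ℓ - (5/6)*ℓ^2 + r*((-5/8) + (5/12)*ℓ))
       + ((-25/162) + (25/36)*ℓ - (25/36)*ℓ^2 + r*((-25/54) + (25/36)*ℓ)) * u
       + ((-25/162) + (125/162)*ℓ - (275/216)*ℓ^2 + (25/36)*ℓ^3
          + r*((-25/162) + (25/54)*ℓ - (25/72)*ℓ^2)) * u^2| ≤ 1 := by
  have hr1 : |r| ≤ 1 := abs_le.mpr ⟨hrl, hrr⟩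
  have hbox5 : (0:ℝ) ≤ ((7/10) - ℓ) * (ℓ - (3/5)) := mul_nonneg (by linarith) (by linarith)
  have hsq : (0:ℝ) ≤ (ℓ - 3/5)^2 := sq_nonneg _
  have hcube : ℓ^3 ≤ (7/10)*ℓ^2 := by nlinarith [sq_nonneg ℓ]
  have h1 : (6/5)*ℓ - 9/25 ≤ ℓ^2 := by nlinarith [hsq]
  have h2 : ℓ^2 ≤ (13/10)*ℓ - 21/50 := by nlinarith [hbox5]
  have hcube2 : (3/5)*ℓ^2 ≤ ℓ^3 := by nlinarith [sq_nonneg ℓ]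
  -- w0
  have hP0 : |(-55/216) + (10/9)*ℓ - (5/6)*ℓ^2| ≤ 1/5 := by
    rw [abs_le]; constructor <;> linarith [h1, h2]
  have hQ0 : |(-5/8) + (5/12)*ℓ| ≤ 2/5 := by
    rw [abs_le]; constructor <;> linarith
  have hW0 : |(-55/216) + (10/9)*ℓ - (5/6)*ℓ^2 + r*((-5/8) + (5/12)*ℓ)| ≤ 3/5 := by
    calc |(-55/216) + (10/9)*ℓ - (5/6)*ℓ^2 + r*((-5/8) + (5/12)*ℓ)|
        ≤ |(-55/216) + (10/9)*ℓ - (5/6)*ℓ^2| + |r*((-5/8) + (5/12)*ℓ)| := abs_add_le _ _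
      _ ≤ 1/5 + 2/5 := by
          refine add_le_add hP0 ?_
          rw [abs_mul]
          calc |r| * |(-5/8) + (5/12)*ℓ| ≤ 1 * (2/5) :=
                mul_le_mul hr1 hQ0 (abs_nonneg _) one_pos.le
            _ = 2/5 := by norm_num
      _ = 3/5 := by norm_num
  -- w1
  have hP1 : |(-25/162) + (25/36)*ℓ - (25/36)*ℓ^2| ≤ 1/10 := by
    rw [abs_le]; constructor <;> linarith [h1, h2]
  have hQ1 : |(-25/54) + (25/36)*ℓ| ≤ 1/10 := by
    rw [abs_le]; constructor <;> linarith
  have hW1 : |(-25/162) + (25/36)*ℓ - (25/36)*ℓ^2 + r*((-25/54) + (25/36)*ℓ)| ≤ 1/5 := by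
    calc |(-25/162) + (25/36)*ℓ - (25/36)*ℓ^2 + r*((-25/54) + (25/36)*ℓ)|
        ≤ |(-25/162) + (25/36)*ℓ - (25/36)*ℓ^2| + |r*((-25/54) + (25/36)*ℓ)| := abs_add_le _ _
      _ ≤ 1/10 + 1/10 := by
          refine add_le_add hP1 ?_
          rw [abs_mul]
          calc |r| * |(-25/54) + (25/36)*ℓ| ≤ 1 * (1/10) :=
                mul_le_mul hr1 hQ1 (abs_nonneg _) one_pos.le
            _ = 1/10 := by norm_num
      _ = 1/5 := by norm_num
  -- w2
  have hP2 : |(-25/162) + (125/162)*ℓ - (275/216)*ℓ^2 + (25/36)*ℓ^3| ≤ 1/10 := by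
    rw [abs_le]; constructor <;> linarith [h1, h2, hcube, hcube2]
  have hQ2 : |(-25/162) + (25/54)*ℓ - (25/72)*ℓ^2| ≤ 1/10 := by
    rw [abs_le]; constructor <;> linarith [h1, h2]
  have hW2 : |(-25/162) + (125/162)*ℓ - (275/216)*ℓ^2 + (25/36)*ℓ^3
      + r*((-25/162) + (25/54)*ℓ - (25/72)*ℓ^2)| ≤ 1/5 := by
    calc |(-25/162) + (125/162)*ℓ - (275/216)*ℓ^2 + (25/36)*ℓ^3
        + r*((-25/162) + (25/54)*ℓ - (25/72)*ℓ^2)|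
        ≤ |(-25/162) + (125/162)*ℓ - (275/216)*ℓ^2 + (25/36)*ℓ^3|
          + |r*((-25/162) + (25/54)*ℓ - (25/72)*ℓ^2)| := abs_add_le _ _
      _ ≤ 1/10 + 1/10 := by
          refine add_le_add hP2 ?_
          rw [abs_mul]
          calc |r| * |(-25/162) + (25/54)*ℓ - (25/72)*ℓ^2| ≤ 1 * (1/10) :=
                mul_le_mul hr1 hQ2 (abs_nonneg _) one_pos.le
            _ = 1/10 := by norm_num
      _ = 1/5 := by norm_num
  set a := (-55/216) + (10/9)*ℓ - (5/6)*ℓ^2 + r*((-5/8) + (5/12)*ℓ) with ha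
  set b := (-25/162) + (25/36)*ℓ - (25/36)*ℓ^2 + r*((-25/54) + (25/36)*ℓ) with hb
  set c := (-25/162) + (125/162)*ℓ - (275/216)*ℓ^2 + (25/36)*ℓ^3
      + r*((-25/162) + (25/54)*ℓ - (25/72)*ℓ^2) with hc
  have hu2 : u^2 ≤ 1 := by nlinarith
  calc |a + b*u + c*u^2| ≤ |a| + |b*u| + |c*u^2| := abs_add_three _ _ _
    _ ≤ 3/5 + 1/5 + 1/5 := by
        refine add_le_add (add_le_add hW0 ?_) ?_
        · rw [abs_mul, abs_of_nonneg hu]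
          calc |b| * u ≤ (1/5) * 1 := mul_le_mul hW1 hu1 hu (by norm_num)
            _ = 1/5 := by norm_num
        · rw [abs_mul, abs_of_nonneg (sq_nonneg u)]
          calc |c| * u^2 ≤ (1/5) * 1 := mul_le_mul hW2 hu2 (sq_nonneg u) (by norm_num)
            _ = 1/5 := by norm_num
    _ ≤ 1 := by norm_num

set_option maxHeartbeats 2000000 in
lemma core (u r ℓ lam B C₁ : ℝ)
    (hu : 0 < u) (hu8 : u ≤ 1/8)
    (hl1 : 3/5 ≤ ℓ) (hl2 : ℓ ≤ 7/10)
    (hB : 0 ≤ B)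
    (hC₁ : 0 < C₁)
    (hlam : |lam| ≤ C₁ * u)
    (hCu : (C₁ + 1) * u ≤ 1/4)
    (hr : |r| ≤ B * u) (hru : B * u ≤ 1)
    (heq : lam * (lam - 1) * (1/u - 1 - ((-1 - 2*ℓ) + r) / 2) + lam - 5/6 = 0) :
    |lam - (-(5/6)*u + (-(5/9)+(5/6)*ℓ)*u^2)| ≤ (2*B + 8) * u^3 := by
  have hu0 : u ≠ 0 := hu.ne'
  set T : ℝ := -(5/6)*u + (-(5/9)+(5/6)*ℓ)*u^2 with hT_def
  set M : ℝ := 1/u - 1 - ((-1 - 2*ℓ) + r) / 2 with hM_def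
  set S : ℝ := (lam + T - 1) * M + 1 with hS_def
  set R : ℝ := T*(T-1)*M + T - 5/6 with hR_def
  have hid : (lam - T) * S = -R := by
    rw [hS_def, hR_def, hM_def, hT_def]
    linear_combination heq
  have hRdec : R = -(5/12)*r*u +
      (((-55/216) + (10/9)*ℓ - (5/6)*ℓ^2 + r*((-5/8) + (5/12)*ℓ))
       + ((-25/162) + (25/36)*ℓ - (25/36)*ℓ^2 + r*((-25/54) + (25/36)*ℓ)) * u
       + ((-25/162) + (125/162)*ℓ - (275/216)*ℓ^2 + (25/36)*ℓ^3
          + r*((-25/162) + (25/54)*ℓ - (25/72)*ℓ^2)) * u^2) * u^2 := by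
    rw [hR_def, hT_def, hM_def]
    field_simp
    ring
  clear heq
  clear_value T M S R
  obtain ⟨hlam1, hlam2⟩ := abs_le.mp hlam
  obtain ⟨hr1, hr2⟩ := abs_le.mp hr
  have hrl : -1 ≤ r := by linarith
  have hrr : r ≤ 1 := by linarith
  have hu1 : u ≤ 1 := by linarith
  have hClam : C₁ * u ≤ 1/4 := by nlinarith
  have hT1 : -u ≤ T := by rw [hT_def]; nlinarith [sq_nonneg u]
  have hT2 : T ≤ 0 := by rw [hT_def]; nlinarith [sq_nonneg u]
  have hM1 : 1/u - 1 ≤ M := by rw [hM_def]; linarith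
  have hM2 : M ≤ 1/u + 2 := by rw [hM_def]; linarith
  have hu_inv : 8 ≤ 1/u := by rw [le_div_iff₀ hu]; linarith
  have hM0 : 0 ≤ M := by linarith
  have hfac : lam + T - 1 ≤ -(3/4) := by linarith
  have hS1 : S ≤ -(1/(4*u)) := by
    rw [hS_def]
    have hq1 : (lam + T - 1) * M ≤ (-(3/4)) * M :=
      mul_le_mul_of_nonneg_right hfac hM0
    have hq2 : (-(3/4)) * M ≤ (-(3/4)) * (1/u - 1) := by linarith
    have hq3 : 1/(4*u) = (1/u)/4 := by
      rw [div_div, mul_comm]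
    rw [hq3]
    linarith
  have hW : |((-55/216) + (10/9)*ℓ - (5/6)*ℓ^2 + r*((-5/8) + (5/12)*ℓ))
       + ((-25/162) + (25/36)*ℓ - (25/36)*ℓ^2 + r*((-25/54) + (25/36)*ℓ)) * u
       + ((-25/162) + (125/162)*ℓ - (275/216)*ℓ^2 + (25/36)*ℓ^3
          + r*((-25/162) + (25/54)*ℓ - (25/72)*ℓ^2)) * u^2| ≤ 1 :=
    wbound r ℓ u hrl hrr hl1 hl2 hu.le hu1
  have hRbound : |R| ≤ ((5/12)*B + 1) * u^2 := by
    rw [hRdec]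
    refine le_trans (abs_add_le _ _) ?_
    have hx1 : |(-(5/12))*r*u| ≤ (5/12)*B*u^2 := by
      rw [abs_mul, abs_mul, abs_of_pos hu]
      have he : |(-(5/12):ℝ)| = 5/12 := by norm_num
      rw [he]
      have : |r| * u ≤ (B*u) * u := mul_le_mul_of_nonneg_right hr hu.le
      nlinarith
    have hx2 : |(((-55/216) + (10/9)*ℓ - (5/6)*ℓ^2 + r*((-5/8) + (5/12)*ℓ))
       + ((-25/162) + (25/36)*ℓ - (25/36)*ℓ^2 + r*((-25/54) + (25/36)*ℓ)) * u
       + ((-25/162) + (125/162)*ℓ - (275/216)*ℓ^2 + (25/36)*ℓ^3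
          + r*((-25/162) + (25/54)*ℓ - (25/72)*ℓ^2)) * u^2) * u^2| ≤ 1 * u^2 := by
      rw [abs_mul, abs_of_nonneg (sq_nonneg u)]
      exact mul_le_mul_of_nonneg_right hW (sq_nonneg u)
    have := add_le_add hx1 hx2
    calc |(-(5/12))*r*u| + |(((-55/216) + (10/9)*ℓ - (5/6)*ℓ^2 + r*((-5/8) + (5/12)*ℓ))
       + ((-25/162) + (25/36)*ℓ - (25/36)*ℓ^2 + r*((-25/54) + (25/36)*ℓ)) * u
       + ((-25/162) + (125/162)*ℓ - (275/216)*ℓ^2 + (25/36)*ℓ^3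
          + r*((-25/162) + (25/54)*ℓ - (25/72)*ℓ^2)) * u^2) * u^2|
        ≤ (5/12)*B*u^2 + 1 * u^2 := this
      _ = ((5/12)*B + 1) * u^2 := by ring
  have habs : |lam - T| * |S| = |R| := by rw [← abs_mul, hid, abs_neg]
  have hSabs : 1/(4*u) ≤ |S| := by
    have h1 : 1/(4*u) ≤ -S := by linarith
    exact le_trans h1 (neg_le_abs S)
  have h4u : (0:ℝ) < 4*u := by linarith
  have hfin : |lam - T| ≤ ((5/12)*B + 1) * u^2 * (4*u) := by
    have hx1 : |lam - T| * (1/(4*u)) ≤ |lam - T| * |S| :=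
      mul_le_mul_of_nonneg_left hSabs (abs_nonneg _)
    rw [habs] at hx1
    have hx2 : |lam - T| * (1/(4*u)) ≤ ((5/12)*B + 1) * u^2 := le_trans hx1 hRbound
    have hx3 : |lam - T| * (1/(4*u)) * (4*u) ≤ ((5/12)*B + 1) * u^2 * (4*u) :=
      mul_le_mul_of_nonneg_right hx2 h4u.le
    have hx4 : |lam - T| * (1/(4*u)) * (4*u) = |lam - T| := by
      field_simp
    linarith [hx3, hx4.symm.le]
  calc |lam - T| ≤ ((5/12)*B + 1) * u^2 * (4*u) := hfin
    _ ≤ (2*B + 8) * u^3 := by nlinarith [mul_pos (mul_pos hu hu) hu, sq_nonneg u, hB, hu]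

/-- For `j ∈ {0,1}`, `d₀(1−j) = 1 − 2log2 − 2j`; consequently, if `λ̂₁(ν)` solves
`p(ν;λ̂₁) = 0` with `|λ̂₁| ≲ 1/|log ν|`, then
`λ̂₁ = −(5/6)/|log ν| + (−5/9 + (5/6)log 2)/|log ν|² + O(1/|log ν|³)` as `ν → 0`. -/
theorem d0_values_and_lambda1_expansion :
    (∀ j : ℕ, j = 0 ∨ j = 1 →
      d₀ (1 - (j : ℝ)) = 1 - 2 * Real.log 2 - 2 * (j : ℝ)) ∧
    (∀ C₁ : ℝ, 0 < C₁ → ∃ C : ℝ, 0 < C ∧ ∃ ν₀ : ℝ, 0 < ν₀ ∧ ν₀ < 1 ∧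
      ∀ ν : ℝ, 0 < ν → ν < ν₀ → ∀ lam : ℝ,
        pfun ν lam = 0 → |lam| ≤ C₁ / |Real.log ν| →
        |lam - (-(5 / 6) / |Real.log ν|
            + (-(5 / 9) + (5 / 6) * Real.log 2) / |Real.log ν| ^ 2)|
          ≤ C / |Real.log ν| ^ 3) := by
  constructor
  · rintro j (rfl | rfl)
    · norm_num [d0_one]
    · push_cast
      norm_num [d0_zero]
      linarith [d0_zero]
  · intro C₁ hC₁
    obtain ⟨K, hK0, δ, hδ, hlip⟩ := d0_lip
    have hl1 : 3/5 ≤ Real.log 2 := by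
      have := Real.log_two_gt_d9; linarith
    have hl2 : Real.log 2 ≤ 7/10 := by
      have := Real.log_two_lt_d9; linarith
    set B : ℝ := K * C₁ with hB_def
    have hB : 0 ≤ B := mul_nonneg hK0 hC₁.le
    set L₀ : ℝ := 8 + 4*(C₁+1) + B + C₁/δ with hL₀_def
    have hL₀pos : 0 < L₀ := by
      have : 0 ≤ C₁/δ := div_nonneg hC₁.le hδ.le
      rw [hL₀_def]; linarith
    refine ⟨2*B + 8, by linarith, Real.exp (-L₀), Real.exp_pos _, ?_, ?_⟩
    · exact Real.exp_lt_one_iff.mpr (by linarith)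
    intro ν hν hνν₀ lam hp hlam
    have hlog : Real.log ν < -L₀ := by
      have h := Real.log_lt_log hν hνν₀
      rwa [Real.log_exp] at h
    have hlogneg : Real.log ν < 0 := by linarith
    set L : ℝ := |Real.log ν| with hL_def
    have hLval : L = -Real.log ν := abs_of_neg hlogneg
    have hLge : L₀ < L := by rw [hLval]; linarith
    have hLpos : 0 < L := by linarith
    set u : ℝ := 1/L with hu_def
    have hu : 0 < u := by rw [hu_def]; positivity
    have hL8 : 8 ≤ L := by rw [hL₀_def] at hLge; linarith [div_nonneg hC₁.le hδ.le]
    have hu8 : u ≤ 1/8 := by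
      rw [hu_def]
      exact one_div_le_one_div_of_le (by norm_num) hL8
    have hlamu : |lam| ≤ C₁ * u := by
      rw [hu_def, mul_one_div]
      exact hlam
    have hCu : (C₁ + 1) * u ≤ 1/4 := by
      rw [hu_def, mul_one_div, div_le_iff₀ hLpos]
      rw [hL₀_def] at hLge
      have : 0 ≤ C₁/δ := div_nonneg hC₁.le hδ.le
      linarith
    have hδlam : |lam| ≤ δ := by
      refine le_trans hlam ?_
      rw [div_le_iff₀ hLpos]
      have h1 : C₁/δ ≤ L := by
        rw [hL₀_def] at hLge; linarith
      calc C₁ = (C₁/δ) * δ := by field_simp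
        _ ≤ L * δ := mul_le_mul_of_nonneg_right h1 hδ.le
        _ = δ * L := mul_comm _ _
    set r : ℝ := d₀ lam - (-1 - 2*Real.log 2) with hr_def
    have hr : |r| ≤ B * u := by
      have h1 : |d₀ lam - d₀ 0| ≤ K * |lam| := hlip lam hδlam
      rw [d0_zero] at h1
      have h2 : K * |lam| ≤ K * (C₁ * u) := mul_le_mul_of_nonneg_left hlamu hK0
      rw [hr_def, hB_def]
      calc |d₀ lam - (-1 - 2*Real.log 2)| ≤ K * |lam| := h1
        _ ≤ K * (C₁ * u) := h2
        _ = K * C₁ * u := by ring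
    have hru : B * u ≤ 1 := by
      rw [hu_def, mul_one_div, div_le_one hLpos]
      rw [hL₀_def] at hLge
      linarith [div_nonneg hC₁.le hδ.le]
    have h1u : 1/u = L := one_div_one_div L
    have heq : lam * (lam - 1) * (1/u - 1 - ((-1 - 2*Real.log 2) + r) / 2)
        + lam - 5/6 = 0 := by
      rw [h1u]
      rw [pfun] at hp
      rw [← hL_def] at hp
      have hd : (-1 - 2*Real.log 2) + r = d₀ lam := by rw [hr_def]; ring
      rw [hd]
      linarith [hp]
    have hcore := core u r (Real.log 2) lam B C₁ hu hu8 hl1 hl2 hB hC₁ hlamu hCu hr hru heq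
    have egoal : lam - (-(5 / 6) / L + (-(5 / 9) + (5 / 6) * Real.log 2) / L ^ 2)
        = lam - (-(5/6)*u + (-(5/9)+(5/6)*Real.log 2)*u^2) := by
      rw [hu_def]; ring
    have cgoal : (2*B + 8) * u^3 = (2*B + 8) / L ^ 3 := by
      rw [hu_def]; ring
    rw [egoal, ← cgoal]
    exact hcore
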